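/- Let (Z, 𝒵) be a measurable space, κ a Markov kernel from Z to Z (so κ(z) is a probability measure on Z for each z, measurably in z), r : Z → ℝ a bounded measurable function, and γ ∈ [0,1). Let Q* : Z → ℝ be a bounded measurable function satisfying the Bellman evaluation equation Q*(z) = r(z) + γ ∫ Q* dκ(z) for all z ∈ Z. Let ν be a probability measure on Z, define ν₀ = ν and ν_{h+1} = ν_h bound with κ (i.e., ν_{h+1}(A) = ∫ κ(z)(A) dν_h(z)), and define the discounted occupancy measure d_ν = (1 − γ) Σ_{h=0}^∞ γ^h ν_h. Then for every bounded measurable Q : Z → ℝ, ∫ (Q − Q*) dν = (1/(1 − γ)) ∫ [Q(z) − r(z) − γ ∫ Q dκ(z)] d d_ν(z). -/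

import Mathlib

open MeasureTheory ProbabilityTheory Filter

lemma integrable_of_bdd' {Z : Type*} [MeasurableSpace Z] {μ : Measure Z} [IsFiniteMeasure μ]
    {f : Z → ℝ} (hm : Measurable f) {C : ℝ} (hb : ∀ z, |f z| ≤ C) : Integrable f μ :=
  (integrable_const C).mono' hm.aestronglyMeasurable (Filter.Eventually.of_forall hb)

lemma meas_int_kernel {Z : Type*} [MeasurableSpace Z] (κ : Kernel Z Z) [IsMarkovKernel κ]
    {f : Z → ℝ} (hm : Measurable f) : Measurable fun z => ∫ y, f y ∂(κ z) := by
  have := (hm.stronglyMeasurable.comp_measurable (measurable_snd : Measurable fun p : Z × Z => p.2)).integral_kernel_prod_right' (κ := κ)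
  exact this.measurable

lemma integral_bind'' {Z : Type*} [MeasurableSpace Z] (μ : Measure Z) [IsProbabilityMeasure μ]
    (κ : Kernel Z Z) [IsMarkovKernel κ] {f : Z → ℝ} (hm : Measurable f) {C : ℝ}
    (hb : ∀ z, |f z| ≤ C) :
    ∫ y, f y ∂(μ.bind (fun z => κ z)) = ∫ z, ∫ y, f y ∂(κ z) ∂μ := by
  have hbind : μ.bind (fun z => κ z) = (μ ⊗ₘ κ).map Prod.snd := by
    ext s hs
    rw [Measure.bind_apply hs κ.measurable.aemeasurable, Measure.map_apply measurable_snd hs,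
      Measure.compProd_apply (measurable_snd hs)]
    rfl
  rw [hbind, integral_map measurable_snd.aemeasurable hm.aestronglyMeasurable]
  exact Measure.integral_compProd (f := fun p : Z × Z => f p.2) (integrable_of_bdd' (hm.comp measurable_snd) (fun p => hb p.2))

/-- Simulation lemma (Lemma 6): the prediction error of any bounded measurable
`Q` at the start distribution equals the normalized expected Bellman error under
the discounted occupancy measure. -/
theorem stmt_2 {Z : Type*} [MeasurableSpace Z]
    (κ : Kernel Z Z) [IsMarkovKernel κ]
    (r : Z → ℝ) (hr_meas : Measurable r) (hr_bdd : ∃ C, ∀ z, |r z| ≤ C)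
    (γ : ℝ) (hγ0 : 0 ≤ γ) (hγ1 : γ < 1)
    (Qstar : Z → ℝ) (hQs_meas : Measurable Qstar) (hQs_bdd : ∃ C, ∀ z, |Qstar z| ≤ C)
    (hfix : ∀ z, Qstar z = r z + γ * ∫ y, Qstar y ∂(κ z))
    (ν : Measure Z) [IsProbabilityMeasure ν]
    (seq : ℕ → Measure Z) (hseq0 : seq 0 = ν)
    (hseqS : ∀ h, seq (h + 1) = (seq h).bind (fun z => κ z))
    (dν : Measure Z)
    (hdν : dν = Measure.sum (fun h => (ENNReal.ofReal ((1 - γ) * γ ^ h)) • seq h)) :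
    ∀ Q : Z → ℝ, Measurable Q → (∃ C, ∀ z, |Q z| ≤ C) →
      ∫ z, (Q z - Qstar z) ∂ν
        = (1 / (1 - γ)) * ∫ z, (Q z - r z - γ * ∫ y, Q y ∂(κ z)) ∂dν := by
  intro Q hQm hQb
  obtain ⟨CQ, hCQ⟩ := hQb
  obtain ⟨Cs, hCs⟩ := hQs_bdd
  obtain ⟨Cr, hCr⟩ := hr_bdd
  have hne : Nonempty Z := by
    by_contra h
    have h1 : (Set.univ : Set Z) = ∅ := Set.univ_eq_empty_iff.mpr (not_nonempty_iff.mp h)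
    have h2 := measure_univ (μ := ν)
    rw [h1, measure_empty] at h2
    exact zero_ne_one h2
  have h1γ : (1 : ℝ) - γ ≠ 0 := by linarith
  have h1γpos : (0 : ℝ) < 1 - γ := by linarith
  have hprob : ∀ h, IsProbabilityMeasure (seq h) := by
    intro h
    induction h with
    | zero => rw [hseq0]; infer_instance
    | succ n ih =>
      rw [hseqS n]
      constructor
      rw [Measure.bind_apply MeasurableSet.univ κ.measurable.aemeasurable]
      simp [measure_univ, ih.measure_univ]
  set D : Z → ℝ := fun z => Q z - Qstar z with hD
  have hDm : Measurable D := hQm.sub hQs_meas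
  set M : ℝ := CQ + Cs with hM
  have hDb : ∀ z, |D z| ≤ M := fun z =>
    (abs_sub (Q z) (Qstar z)).trans (add_le_add (hCQ z) (hCs z))
  have hM0 : 0 ≤ M := le_trans (abs_nonneg _) (hDb hne.some)
  set a : ℕ → ℝ := fun h => ∫ z, D z ∂(seq h) with ha
  have hab : ∀ h, |a h| ≤ M := by
    intro h
    haveI := hprob h
    have := norm_integral_le_of_norm_le_const (μ := seq h) (f := D) (C := M)
      (Filter.Eventually.of_forall fun z => hDb z)
    simpa [measure_univ] using this
  set E : Z → ℝ := fun z => Q z - r z - γ * ∫ y, Q y ∂(κ z) with hE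
  have hEeq : ∀ z, E z = D z - γ * ∫ y, D y ∂(κ z) := by
    intro z
    have h1 : ∫ y, D y ∂(κ z) = (∫ y, Q y ∂(κ z)) - ∫ y, Qstar y ∂(κ z) :=
      integral_sub (integrable_of_bdd' hQm hCQ) (integrable_of_bdd' hQs_meas hCs)
    have h2 := hfix z
    rw [h1]
    simp only [hE, hD]
    ring_nf
    linarith [h2]
  have hkm : Measurable fun z => ∫ y, D y ∂(κ z) := meas_int_kernel κ hDm
  have hkb : ∀ z, |∫ y, D y ∂(κ z)| ≤ M := by
    intro z
    have := norm_integral_le_of_norm_le_const (μ := κ z) (f := D) (C := M)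
      (Filter.Eventually.of_forall fun y => hDb y)
    simpa [measure_univ] using this
  have hEm : Measurable E := (hQm.sub hr_meas).sub (measurable_const.mul (meas_int_kernel κ hQm))
  have hQkb : ∀ z, |∫ y, Q y ∂(κ z)| ≤ CQ := by
    intro z
    have := norm_integral_le_of_norm_le_const (μ := κ z) (f := Q) (C := CQ)
      (Filter.Eventually.of_forall fun y => hCQ y)
    simpa [measure_univ] using this
  have hEb : ∀ z, |E z| ≤ CQ + Cr + γ * CQ := by
    intro z
    have h1 : |E z| ≤ |Q z| + |r z| + |γ * ∫ y, Q y ∂(κ z)| := by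
      simp only [hE]
      calc |Q z - r z - γ * ∫ y, Q y ∂(κ z)|
          ≤ |Q z - r z| + |γ * ∫ y, Q y ∂(κ z)| := abs_sub _ _
        _ ≤ |Q z| + |r z| + |γ * ∫ y, Q y ∂(κ z)| := by
            gcongr; exact abs_sub _ _
    refine h1.trans ?_
    have : |γ * ∫ y, Q y ∂(κ z)| = γ * |∫ y, Q y ∂(κ z)| := by
      rw [abs_mul, abs_of_nonneg hγ0]
    rw [this]
    exact add_le_add (add_le_add (hCQ z) (hCr z)) (mul_le_mul_of_nonneg_left (hQkb z) hγ0)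
  have hstep : ∀ h, ∫ z, E z ∂(seq h) = a h - γ * a (h + 1) := by
    intro h
    haveI := hprob h
    haveI := hprob (h + 1)
    have hcongr : ∫ z, E z ∂(seq h) = ∫ z, (D z - γ * ∫ y, D y ∂(κ z)) ∂(seq h) := by
      exact integral_congr_ae (Filter.Eventually.of_forall hEeq)
    rw [hcongr, integral_sub (integrable_of_bdd' hDm hDb)
      ((integrable_of_bdd' hkm hkb).const_mul γ), integral_const_mul]
    congr 1
    show γ * (∫ z, ∫ y, D y ∂κ z ∂seq h) = γ * a (h + 1)
    congr 1
    calc ∫ z, ∫ y, D y ∂κ z ∂seq h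
        = ∫ y, D y ∂((seq h).bind fun z => κ z) :=
          (integral_bind'' (seq h) κ hDm hDb).symm
      _ = a (h + 1) := by rw [← hseqS h]
  -- probability of dν
  have hcnn : ∀ h : ℕ, 0 ≤ (1 - γ) * γ ^ h := fun h =>
    mul_nonneg (le_of_lt h1γpos) (pow_nonneg hγ0 h)
  have hgeo : Summable (fun h : ℕ => (1 - γ) * γ ^ h) :=
    (summable_geometric_of_lt_one hγ0 hγ1).mul_left _
  haveI hdνprob : IsProbabilityMeasure dν := by
    constructor
    rw [hdν, Measure.sum_apply _ MeasurableSet.univ]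
    simp only [Measure.smul_apply, smul_eq_mul]
    have huniv : ∀ h, (seq h) Set.univ = 1 := fun h => (hprob h).measure_univ
    simp_rw [huniv, mul_one]
    rw [← ENNReal.ofReal_tsum_of_nonneg hcnn hgeo]
    rw [tsum_mul_left, tsum_geometric_of_lt_one hγ0 hγ1]
    rw [mul_inv_cancel₀ h1γ]
    exact ENNReal.ofReal_one
  have hEint : Integrable E dν := integrable_of_bdd' hEm hEb
  have hEsum : ∫ z, E z ∂dν = ∑' h : ℕ, (1 - γ) * γ ^ h * (a h - γ * a (h + 1)) := by
    rw [hdν] at hEint ⊢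
    rw [integral_sum_measure hEint]
    refine tsum_congr fun h => ?_
    rw [integral_smul_measure, ENNReal.toReal_ofReal (hcnn h), hstep h, smul_eq_mul]
  set b : ℕ → ℝ := fun h => γ ^ h * a h with hb
  have hgb : ∀ h : ℕ, (1 - γ) * γ ^ h * (a h - γ * a (h + 1)) = (1 - γ) * (b h - b (h + 1)) := by
    intro h
    simp only [hb, pow_succ]
    ring
  have hbb : ∀ h, |b h| ≤ M * γ ^ h := by
    intro h
    simp only [hb]
    rw [abs_mul, abs_of_nonneg (pow_nonneg hγ0 h), mul_comm]
    exact mul_le_mul_of_nonneg_right (hab h) (pow_nonneg hγ0 h)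
  have hbtend : Filter.Tendsto b Filter.atTop (nhds 0) := by
    apply squeeze_zero_norm (fun h => (hbb h))
    have := tendsto_pow_atTop_nhds_zero_of_lt_one hγ0 hγ1
    simpa using this.const_mul M
  set g : ℕ → ℝ := fun h => (1 - γ) * γ ^ h * (a h - γ * a (h + 1)) with hg
  have hgsummable : Summable g := by
    apply Summable.of_norm_bounded (g := fun h => (1 - γ) * (2 * M) * γ ^ h)
      (((summable_geometric_of_lt_one hγ0 hγ1).mul_left _))
    intro h
    show |(1 - γ) * γ ^ h * (a h - γ * a (h + 1))| ≤ _
    rw [hgb h, abs_mul, abs_of_nonneg (le_of_lt h1γpos), mul_assoc]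
    refine mul_le_mul_of_nonneg_left ?_ (le_of_lt h1γpos)
    calc |b h - b (h + 1)| ≤ |b h| + |b (h + 1)| := abs_sub _ _
      _ ≤ M * γ ^ h + M * γ ^ (h + 1) := add_le_add (hbb h) (hbb (h + 1))
      _ ≤ M * γ ^ h + M * γ ^ h := by
          refine add_le_add le_rfl ?_
          exact mul_le_mul_of_nonneg_left
            (pow_le_pow_of_le_one hγ0 (le_of_lt hγ1) (Nat.le_succ h)) hM0
      _ = 2 * M * γ ^ h := by ring
  have hgtsum : ∑' h, g h = (1 - γ) * b 0 := by
    have h1 : Filter.Tendsto (fun n => ∑ i ∈ Finset.range n, g i) Filter.atTop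
        (nhds ((1 - γ) * b 0)) := by
      have heq : ∀ n, ∑ i ∈ Finset.range n, g i = (1 - γ) * (b 0 - b n) := by
        intro n
        calc ∑ i ∈ Finset.range n, g i = ∑ i ∈ Finset.range n, (1 - γ) * (b i - b (i + 1)) :=
              Finset.sum_congr rfl fun i _ => hgb i
          _ = (1 - γ) * ∑ i ∈ Finset.range n, (b i - b (i + 1)) := by
              rw [Finset.mul_sum]
          _ = (1 - γ) * (b 0 - b n) := by rw [Finset.sum_range_sub' b n]
      simp_rw [heq]
      have : Filter.Tendsto (fun n => b 0 - b n) Filter.atTop (nhds (b 0 - 0)) :=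
        (tendsto_const_nhds).sub hbtend
      rw [sub_zero] at this
      exact this.const_mul _
    exact tendsto_nhds_unique hgsummable.hasSum.tendsto_sum_nat h1
  have hb0 : b 0 = ∫ z, (Q z - Qstar z) ∂ν := by
    simp only [hb, pow_zero, one_mul, ha, hseq0, hD]
  rw [hEsum, hgtsum]
  have hfin : (1 : ℝ) / (1 - γ) * ((1 - γ) * b 0) = b 0 := by field_simp
  rw [hfin, hb0]
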